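/- Let T ≥ 2, let y_1,…,y_T ∈ ℝ, let γ > 0, λ ≥ 0, and let m be an integer with 1 ≤ m < T. Define C′ = min_{α ≥ 0} { Cost(y_{1:m}, α; γ) + Cost(y_{T:(m+1)}, γα; 1/γ) }, where the first Cost is computed from the data (y_1,…,y_m) with decay γ and the second from the time-reversed data (y_T, y_{T−1}, …, y_{m+1}) with decay 1/γ, evaluated at terminal amplitude γα. Then C′ equals the minimum, over all integers k ≥ 0 and segmentations 0 = τ_0 < τ_1 < … < τ_k < τ_{k+1} = T of {1,…,T} with m ∉ {τ_1,…,τ_k}, of Σ_{j=0}^{k} min_{α ≥ 0} { (1/2) Σ_{t=τ_j+1}^{τ_{j+1}} (y_t − α γ^{t−τ_{j+1}})² } + λk. -/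

import Mathlib

/-- Segment cost `D(a, b, α) = (1/2) ∑_{t=a+1}^{b} (y_t − α γ^{t−b})²`. -/
noncomputable def segCost (y : ℕ → ℝ) (γ : ℝ) (a b : ℕ) (α : ℝ) : ℝ :=
  (1/2) * ∑ t ∈ Finset.Icc (a+1) b, (y t - α * γ ^ ((t : ℤ) - (b : ℤ)))^2

/-- `τ` is a segmentation of the interval `{a+1,…,b}` with `k` changepoints:
`a = τ 0 < τ 1 < … < τ k < τ (k+1) = b`. -/
def IsSeg (a b k : ℕ) (τ : ℕ → ℕ) : Prop :=
  τ 0 = a ∧ τ (k+1) = b ∧ ∀ j ≤ k, τ j < τ (j+1)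

/-- Changepoint objective with per-segment amplitudes:
`∑_{j=0}^{k} D(τ_j, τ_{j+1}, α_j) + λ k`. -/
noncomputable def objAmp (y : ℕ → ℝ) (γ lam : ℝ) (k : ℕ) (τ : ℕ → ℕ) (α : ℕ → ℝ) : ℝ :=
  (∑ j ∈ Finset.range (k+1), segCost y γ (τ j) (τ (j+1)) (α j)) + lam * k

/-- `F(τ)`: the optimal cost of segmenting the first `τ` data points
(minimum of the changepoint objective over segmentations and nonnegative
amplitudes), with the convention `F(0) = −λ`. -/
noncomputable def Fval (y : ℕ → ℝ) (γ lam : ℝ) : ℕ → ℝ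
  | 0 => -lam
  | s+1 => sInf { c | ∃ (k : ℕ) (τ : ℕ → ℕ) (a : ℕ → ℝ), IsSeg 0 (s+1) k τ ∧
      (∀ j ≤ k, 0 ≤ a j) ∧ c = objAmp y γ lam k τ a }

/-- `Cost(y_{1:s}, α; γ) = min_{0 ≤ τ < s} { F(τ) + D(τ, s, α) + λ }`. -/
noncomputable def Cost (y : ℕ → ℝ) (γ lam : ℝ) (s : ℕ) (α : ℝ) : ℝ :=
  sInf { c | ∃ τ : ℕ, τ < s ∧ c = Fval y γ lam τ + segCost y γ τ s α + lam }

/-- Optimal segment cost `min_{α ≥ 0} D(a, b, α)`. -/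
noncomputable def segMin (y : ℕ → ℝ) (γ : ℝ) (a b : ℕ) : ℝ :=
  sInf { c | ∃ α : ℝ, 0 ≤ α ∧ c = segCost y γ a b α }

/-- Changepoint objective with each segment's amplitude optimized separately:
`∑_{j=0}^{k} min_{α ≥ 0} D(τ_j, τ_{j+1}, α) + λ k`. -/
noncomputable def objOpt (y : ℕ → ℝ) (γ lam : ℝ) (k : ℕ) (τ : ℕ → ℕ) : ℝ :=
  (∑ j ∈ Finset.range (k+1), segMin y γ (τ j) (τ (j+1))) + lam * k

lemma segCost_nonneg (y : ℕ → ℝ) (γ : ℝ) (a b : ℕ) (α : ℝ) : 0 ≤ segCost y γ a b α := by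
  unfold segCost
  have : 0 ≤ ∑ t ∈ Finset.Icc (a+1) b, (y t - α * γ ^ ((t : ℤ) - (b : ℤ)))^2 :=
    Finset.sum_nonneg fun t _ => sq_nonneg _
  linarith

lemma objAmp_nonneg {y : ℕ → ℝ} {γ lam : ℝ} (hlam : 0 ≤ lam) (k : ℕ) (τ : ℕ → ℕ) (α : ℕ → ℝ) :
    0 ≤ objAmp y γ lam k τ α := by
  unfold objAmp
  have h1 : 0 ≤ ∑ j ∈ Finset.range (k+1), segCost y γ (τ j) (τ (j+1)) (α j) :=
    Finset.sum_nonneg fun j _ => segCost_nonneg _ _ _ _ _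
  have h2 : (0:ℝ) ≤ (k:ℝ) := Nat.cast_nonneg k
  positivity

lemma isSeg_lt {a b k : ℕ} {τ : ℕ → ℕ} (h : IsSeg a b k τ) :
    ∀ i j, i < j → j ≤ k + 1 → τ i < τ j := by
  intro i j
  induction j with
  | zero => omega
  | succ n ih =>
    intro hij hjk
    have hn : τ n < τ (n+1) := h.2.2 n (by omega)
    rcases Nat.lt_succ_iff_lt_or_eq.mp hij with h' | h'
    · exact lt_trans (ih h' (by omega)) hn
    · subst h'; exact hn

lemma isSeg_le {a b k : ℕ} {τ : ℕ → ℕ} (h : IsSeg a b k τ) :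
    ∀ i j, i ≤ j → j ≤ k + 1 → τ i ≤ τ j := by
  intro i j hij hjk
  rcases Nat.lt_or_ge i j with h' | h'
  · exact le_of_lt (isSeg_lt h i j h' hjk)
  · have : i = j := le_antisymm hij h'
    subst this; exact le_rfl

lemma isSeg_le_top {a b k : ℕ} {τ : ℕ → ℕ} (h : IsSeg a b k τ) :
    ∀ j ≤ k + 1, τ j ≤ b := by
  intro j hj
  have := isSeg_le h j (k+1) hj le_rfl
  rw [h.2.1] at this; exact this

lemma isSeg_single (a b : ℕ) (hab : a < b) : IsSeg a b 0 (fun j => if j = 0 then a else b) := by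
  refine ⟨by simp, by simp, ?_⟩
  intro j hj
  interval_cases j
  simpa using hab

lemma segCost_split (y : ℕ → ℝ) {γ : ℝ} (hγ : γ ≠ 0) (a c b : ℕ) (hac : a ≤ c) (hcb : c ≤ b)
    (β : ℝ) :
    segCost y γ a b β = segCost y γ a c (β * γ ^ ((c:ℤ) - b)) + segCost y γ c b β := by
  unfold segCost
  rw [Finset.Icc_add_one_left_eq_Ioc, Finset.Icc_add_one_left_eq_Ioc, Finset.Icc_add_one_left_eq_Ioc,
    ← Finset.sum_Ioc_consecutive _ hac hcb, mul_add]
  congr 1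
  refine congrArg _ (Finset.sum_congr rfl ?_)
  intro t ht
  have he : (t:ℤ) - b = ((c:ℤ) - b) + ((t:ℤ) - c) := by ring
  have : β * γ ^ ((t:ℤ) - b) = β * γ ^ ((c:ℤ) - b) * γ ^ ((t:ℤ) - c) := by
    rw [mul_assoc, ← zpow_add₀ hγ, ← he]
  rw [this]

lemma segCost_rev (y : ℕ → ℝ) {γ : ℝ} (hγ : 0 < γ) (T a b : ℕ) (hbT : b ≤ T) (β : ℝ) :
    segCost (fun t => y (T + 1 - t)) (1/γ) a b β
      = segCost y γ (T - b) (T - a) (β * γ ^ ((b:ℤ) - (a:ℤ) - 1)) := by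
  have hγ0 : γ ≠ 0 := ne_of_gt hγ
  unfold segCost
  congr 1
  rw [Finset.Icc_add_one_left_eq_Ioc, Finset.Icc_add_one_left_eq_Ioc]
  refine Finset.sum_nbij' (fun t => T + 1 - t) (fun t => T + 1 - t) ?_ ?_ ?_ ?_ ?_
  · intro t ht; simp only [Finset.mem_Ioc] at *; omega
  · intro t ht; simp only [Finset.mem_Ioc] at *; omega
  · intro t ht; simp only [Finset.mem_Ioc] at *; omega
  · intro t ht; simp only [Finset.mem_Ioc] at *; omega
  · intro t ht
    simp only [Finset.mem_Ioc] at ht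
    have hamp : β * (1/γ) ^ ((t:ℤ) - b)
        = β * γ ^ ((b:ℤ) - (a:ℤ) - 1) * γ ^ (((T + 1 - t : ℕ):ℤ) - ((T - a : ℕ):ℤ)) := by
      have he : -((t:ℤ) - b) = ((b:ℤ) - (a:ℤ) - 1) + (((T + 1 - t : ℕ):ℤ) - ((T - a : ℕ):ℤ)) := by
        omega
      rw [one_div, inv_zpow, ← zpow_neg, mul_assoc, ← zpow_add₀ hγ0, ← he]
    rw [hamp]

lemma segMin_bdd (y : ℕ → ℝ) (γ : ℝ) (a b : ℕ) :
    BddBelow { c | ∃ α : ℝ, 0 ≤ α ∧ c = segCost y γ a b α } := by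
  refine ⟨0, ?_⟩
  rintro c ⟨α, hα, rfl⟩
  exact segCost_nonneg _ _ _ _ _

lemma segMin_nonneg (y : ℕ → ℝ) (γ : ℝ) (a b : ℕ) : 0 ≤ segMin y γ a b := by
  apply Real.sInf_nonneg
  rintro c ⟨α, hα, rfl⟩
  exact segCost_nonneg _ _ _ _ _

lemma segMin_le (y : ℕ → ℝ) (γ : ℝ) (a b : ℕ) {α : ℝ} (hα : 0 ≤ α) :
    segMin y γ a b ≤ segCost y γ a b α :=
  csInf_le (segMin_bdd y γ a b) ⟨α, hα, rfl⟩

lemma segCost_quad (y : ℕ → ℝ) (γ : ℝ) (a b : ℕ) (α : ℝ) :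
    segCost y γ a b α =
      (1/2) * ∑ t ∈ Finset.Icc (a+1) b, (y t)^2
      - α * ∑ t ∈ Finset.Icc (a+1) b, y t * γ ^ ((t:ℤ) - b)
      + (α^2/2) * ∑ t ∈ Finset.Icc (a+1) b, (γ ^ ((t:ℤ) - b))^2 := by
  unfold segCost
  have h : ∀ t ∈ Finset.Icc (a+1) b, (y t - α * γ ^ ((t:ℤ) - b))^2
      = (y t)^2 - 2*α*(y t * γ ^ ((t:ℤ) - b)) + α^2 * (γ ^ ((t:ℤ) - b))^2 :=
    fun t _ => by ring
  rw [Finset.sum_congr rfl h, Finset.sum_add_distrib, Finset.sum_sub_distrib,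
    ← Finset.mul_sum, ← Finset.mul_sum]
  ring

lemma segMin_attained (y : ℕ → ℝ) {γ : ℝ} (hγ : 0 < γ) (a b : ℕ) :
    ∃ β : ℝ, 0 ≤ β ∧ segMin y γ a b = segCost y γ a b β := by
  obtain ⟨β, hβ0, hβ⟩ : ∃ β : ℝ, 0 ≤ β ∧ ∀ α : ℝ, 0 ≤ α →
      segCost y γ a b β ≤ segCost y γ a b α := by
    by_cases hab : a + 1 ≤ b
    · set A := ∑ t ∈ Finset.Icc (a+1) b, (γ ^ ((t:ℤ) - b))^2 with hA
      set B := ∑ t ∈ Finset.Icc (a+1) b, y t * γ ^ ((t:ℤ) - b) with hB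
      have hApos : 0 < A := by
        apply Finset.sum_pos
        · intro t _
          have := zpow_pos hγ ((t:ℤ) - b)
          positivity
        · exact ⟨a+1, Finset.mem_Icc.mpr ⟨le_rfl, hab⟩⟩
      by_cases hBpos : 0 < B
      · refine ⟨B / A, le_of_lt (div_pos hBpos hApos), ?_⟩
        intro α hα
        rw [segCost_quad, segCost_quad, ← hA, ← hB]
        have hA0 : A ≠ 0 := ne_of_gt hApos
        have expand : (α - B/A)^2 * A = α^2*A - 2*α*B + (B/A)*B := by
          field_simp
          ring
        have hc2 : (B/A)^2 * A = (B/A) * B := by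
          field_simp
        linarith [mul_nonneg (sq_nonneg (α - B/A)) hApos.le, expand, hc2]
      · refine ⟨0, le_rfl, ?_⟩
        intro α hα
        rw [segCost_quad, segCost_quad, ← hA, ← hB]
        push_neg at hBpos
        have h1 : α * B ≤ 0 := mul_nonpos_of_nonneg_of_nonpos hα hBpos
        have h2 : 0 ≤ α^2 * A := mul_nonneg (sq_nonneg α) hApos.le
        linarith
    · refine ⟨0, le_rfl, ?_⟩
      intro α hα
      have : Finset.Icc (a+1) b = ∅ := Finset.Icc_eq_empty (by omega)
      unfold segCost
      rw [this]
      simp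
  refine ⟨β, hβ0, le_antisymm (segMin_le y γ a b hβ0) ?_⟩
  refine le_csInf ⟨segCost y γ a b 0, 0, le_rfl, rfl⟩ ?_
  rintro c ⟨α, hα, rfl⟩
  exact hβ α hα

lemma le_add_csInf {A B : Set ℝ} (hA : A.Nonempty) (hB : B.Nonempty) {x : ℝ}
    (h : ∀ a ∈ A, ∀ b ∈ B, x ≤ a + b) : x ≤ sInf A + sInf B := by
  have h1 : ∀ a ∈ A, x - sInf B ≤ a := by
    intro a ha
    have h2 : ∀ b ∈ B, x - a ≤ b := fun b hb => by linarith [h a ha b hb]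
    have := le_csInf hB h2
    linarith
  have := le_csInf hA h1
  linarith

lemma Fval_bdd (y : ℕ → ℝ) (γ : ℝ) {lam : ℝ} (hlam : 0 ≤ lam) (s : ℕ) :
    BddBelow { c | ∃ (k : ℕ) (τ : ℕ → ℕ) (a : ℕ → ℝ), IsSeg 0 (s+1) k τ ∧
      (∀ j ≤ k, 0 ≤ a j) ∧ c = objAmp y γ lam k τ a } := by
  refine ⟨0, ?_⟩
  rintro c ⟨k, τ, a, _, _, rfl⟩
  exact objAmp_nonneg hlam k τ a

lemma Fval_nonempty (y : ℕ → ℝ) (γ lam : ℝ) (s : ℕ) :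
    Set.Nonempty { c | ∃ (k : ℕ) (τ : ℕ → ℕ) (a : ℕ → ℝ), IsSeg 0 (s+1) k τ ∧
      (∀ j ≤ k, 0 ≤ a j) ∧ c = objAmp y γ lam k τ a } :=
  ⟨objAmp y γ lam 0 (fun j => if j = 0 then 0 else s+1) (fun _ => 0),
    0, fun j => if j = 0 then 0 else s+1, fun _ => 0,
    isSeg_single 0 (s+1) (Nat.succ_pos s), fun _ _ => le_rfl, rfl⟩

lemma neg_lam_le_Fval (y : ℕ → ℝ) (γ : ℝ) {lam : ℝ} (hlam : 0 ≤ lam) (s : ℕ) :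
    -lam ≤ Fval y γ lam s := by
  cases s with
  | zero => exact le_rfl
  | succ s =>
    refine le_csInf (Fval_nonempty y γ lam s) ?_
    rintro c ⟨k, τ, a, _, _, rfl⟩
    have := objAmp_nonneg (y := y) (γ := γ) hlam k τ a
    linarith

lemma Cost_bdd (y : ℕ → ℝ) (γ : ℝ) {lam : ℝ} (hlam : 0 ≤ lam) (s : ℕ) (α : ℝ) :
    BddBelow { c | ∃ τ : ℕ, τ < s ∧ c = Fval y γ lam τ + segCost y γ τ s α + lam } := by
  refine ⟨0, ?_⟩
  rintro c ⟨t, ht, rfl⟩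
  have h1 := neg_lam_le_Fval y γ hlam t
  have h2 := segCost_nonneg y γ t s α
  linarith

lemma Cost_nonneg (y : ℕ → ℝ) (γ : ℝ) {lam : ℝ} (hlam : 0 ≤ lam) (s : ℕ) (α : ℝ) :
    0 ≤ Cost y γ lam s α := by
  apply Real.sInf_nonneg
  rintro c ⟨t, ht, rfl⟩
  have h1 := neg_lam_le_Fval y γ hlam t
  have h2 := segCost_nonneg y γ t s α
  linarith

lemma costSet_bdd (y : ℕ → ℝ) (γ : ℝ) {lam : ℝ} (hlam : 0 ≤ lam) (s : ℕ) (α : ℝ) :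
    BddBelow { c | ∃ (k : ℕ) (τ : ℕ → ℕ) (a : ℕ → ℝ), IsSeg 0 s k τ ∧
      (∀ j ≤ k, 0 ≤ a j) ∧ a k = α ∧ c = objAmp y γ lam k τ a } := by
  refine ⟨0, ?_⟩
  rintro c ⟨k, τ, a, _, _, _, rfl⟩
  exact objAmp_nonneg hlam k τ a

lemma costSet_nonempty (y : ℕ → ℝ) (γ lam : ℝ) (s : ℕ) (hs : 1 ≤ s) {α : ℝ} (hα : 0 ≤ α) :
    Set.Nonempty { c | ∃ (k : ℕ) (τ : ℕ → ℕ) (a : ℕ → ℝ), IsSeg 0 s k τ ∧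
      (∀ j ≤ k, 0 ≤ a j) ∧ a k = α ∧ c = objAmp y γ lam k τ a } :=
  ⟨objAmp y γ lam 0 (fun j => if j = 0 then 0 else s) (fun _ => α),
    0, fun j => if j = 0 then 0 else s, fun _ => α,
    isSeg_single 0 s hs, fun _ _ => hα, rfl, rfl⟩

lemma cost_eq (y : ℕ → ℝ) (γ : ℝ) {lam : ℝ} (hlam : 0 ≤ lam) (s : ℕ) (hs : 1 ≤ s)
    {α : ℝ} (hα : 0 ≤ α) :
    Cost y γ lam s α = sInf { c | ∃ (k : ℕ) (τ : ℕ → ℕ) (a : ℕ → ℝ), IsSeg 0 s k τ ∧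
      (∀ j ≤ k, 0 ≤ a j) ∧ a k = α ∧ c = objAmp y γ lam k τ a } := by
  apply le_antisymm
  · refine le_csInf (costSet_nonempty y γ lam s hs hα) ?_
    rintro c ⟨k, τ, a, hseg, ha, hak, rfl⟩
    have hτk : τ k < s := by
      have h1 := hseg.2.2 k le_rfl
      rw [hseg.2.1] at h1
      exact h1
    refine le_trans (csInf_le (Cost_bdd y γ hlam s α) ⟨τ k, hτk, rfl⟩) ?_
    rcases Nat.eq_zero_or_pos k with hk | hk
    · subst hk
      have h0 : τ 0 = 0 := hseg.1
      have h1 : τ 1 = s := hseg.2.1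
      have hv : objAmp y γ lam 0 τ a = segCost y γ 0 s α := by
        unfold objAmp
        rw [Finset.sum_range_one, h0, h1, hak]
        push_cast
        ring
      rw [h0, show Fval y γ lam 0 = -lam from rfl, hv]
      linarith
    · obtain ⟨k', rfl⟩ : ∃ k', k = k'+1 := ⟨k-1, by omega⟩
      obtain ⟨s', hs'⟩ : ∃ s', τ (k'+1) = s'+1 := by
        have := isSeg_lt hseg 0 (k'+1) (by omega) (by omega)
        rw [hseg.1] at this
        exact ⟨τ (k'+1) - 1, by omega⟩
      have hF : Fval y γ lam (τ (k'+1)) ≤ objAmp y γ lam k' τ a := by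
        rw [hs']
        show Fval y γ lam (s'+1) ≤ _
        have hdef : Fval y γ lam (s'+1) = sInf { c | ∃ (k : ℕ) (τ : ℕ → ℕ) (a : ℕ → ℝ),
            IsSeg 0 (s'+1) k τ ∧ (∀ j ≤ k, 0 ≤ a j) ∧ c = objAmp y γ lam k τ a } := rfl
        rw [hdef]
        exact csInf_le (Fval_bdd y γ hlam s')
          ⟨k', τ, a, ⟨hseg.1, hs', fun j hj => hseg.2.2 j (by omega)⟩,
            fun j hj => ha j (by omega), rfl⟩
      have hobj : objAmp y γ lam (k'+1) τ a
          = objAmp y γ lam k' τ a + segCost y γ (τ (k'+1)) s (a (k'+1)) + lam := by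
        unfold objAmp
        rw [Finset.sum_range_succ, hseg.2.1]
        push_cast
        ring
      rw [hobj, hak]
      linarith
  · refine le_csInf ⟨Fval y γ lam 0 + segCost y γ 0 s α + lam, 0, by omega, rfl⟩ ?_
    rintro c ⟨t, ht, rfl⟩
    rcases Nat.eq_zero_or_pos t with rfl | htpos
    · refine le_trans (csInf_le (costSet_bdd y γ hlam s α)
        ⟨0, fun j => if j = 0 then 0 else s, fun _ => α,
          isSeg_single 0 s hs, fun _ _ => hα, rfl, rfl⟩) ?_
      have hv : objAmp y γ lam 0 (fun j => if j = 0 then 0 else s) (fun _ => α)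
          = segCost y γ 0 s α := by
        unfold objAmp
        rw [Finset.sum_range_one]
        norm_num
      rw [hv, show Fval y γ lam 0 = -lam from rfl]
      linarith
    · obtain ⟨s', rfl⟩ : ∃ s', t = s'+1 := ⟨t-1, by omega⟩
      have key : ∀ c1 ∈ { c | ∃ (k : ℕ) (τ : ℕ → ℕ) (a : ℕ → ℝ), IsSeg 0 (s'+1) k τ ∧
          (∀ j ≤ k, 0 ≤ a j) ∧ c = objAmp y γ lam k τ a },
          sInf { c | ∃ (k : ℕ) (τ : ℕ → ℕ) (a : ℕ → ℝ), IsSeg 0 s k τ ∧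
            (∀ j ≤ k, 0 ≤ a j) ∧ a k = α ∧ c = objAmp y γ lam k τ a }
          ≤ c1 + (segCost y γ (s'+1) s α + lam) := by
        rintro c1 ⟨k1, σ, a1, hseg1, ha1, rfl⟩
        set τc : ℕ → ℕ := fun j => if j = k1+2 then s else σ j with hτc
        set ac : ℕ → ℝ := fun j => if j = k1+1 then α else a1 j with hac
        have hsegc : IsSeg 0 s (k1+1) τc := by
          refine ⟨?_, ?_, ?_⟩
          · show (if 0 = k1+2 then s else σ 0) = 0
            rw [if_neg (by omega)]
            exact hseg1.1
          · show (if k1+2 = k1+2 then s else σ (k1+2)) = s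
            rw [if_pos rfl]
          · intro j hj
            show (if j = k1+2 then s else σ j) < (if j+1 = k1+2 then s else σ (j+1))
            rcases Nat.lt_or_ge j (k1+1) with h' | h'
            · rw [if_neg (by omega), if_neg (by omega)]
              exact hseg1.2.2 j (by omega)
            · have hj' : j = k1+1 := by omega
              subst hj'
              rw [if_neg (by omega), if_pos rfl, hseg1.2.1]
              exact ht
        have hvalc : objAmp y γ lam (k1+1) τc ac
            = objAmp y γ lam k1 σ a1 + (segCost y γ (s'+1) s α + lam) := by
          unfold objAmp
          rw [Finset.sum_range_succ]
          have h1 : τc (k1+1) = s'+1 := by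
            show (if k1+1 = k1+2 then s else σ (k1+1)) = s'+1
            rw [if_neg (by omega)]
            exact hseg1.2.1
          have h2 : τc (k1+2) = s := by
            show (if k1+2 = k1+2 then s else σ (k1+2)) = s
            rw [if_pos rfl]
          have h3 : ac (k1+1) = α := by
            show (if k1+1 = k1+1 then α else a1 (k1+1)) = α
            rw [if_pos rfl]
          have h4 : ∀ j ∈ Finset.range (k1+1),
              segCost y γ (τc j) (τc (j+1)) (ac j) = segCost y γ (σ j) (σ (j+1)) (a1 j) := by
            intro j hj
            rw [Finset.mem_range] at hj
            show segCost y γ (if j = k1+2 then s else σ j)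
              (if j+1 = k1+2 then s else σ (j+1)) (if j = k1+1 then α else a1 j)
              = segCost y γ (σ j) (σ (j+1)) (a1 j)
            rw [if_neg (by omega), if_neg (by omega), if_neg (by omega)]
          rw [Finset.sum_congr rfl h4, h1, h2, h3]
          push_cast
          ring
        refine le_trans (csInf_le (costSet_bdd y γ hlam s α)
          ⟨k1+1, τc, ac, hsegc, ?_, ?_, rfl⟩) (le_of_eq hvalc)
        · intro j hj
          show 0 ≤ (if j = k1+1 then α else a1 j)
          by_cases h' : j = k1+1
          · rw [if_pos h']; exact hα
          · rw [if_neg h']; exact ha1 j (by omega)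
        · show (if k1+1 = k1+1 then α else a1 (k1+1)) = α
          rw [if_pos rfl]
      have hdef : Fval y γ lam (s'+1) = sInf { c | ∃ (k : ℕ) (τ : ℕ → ℕ) (a : ℕ → ℝ),
          IsSeg 0 (s'+1) k τ ∧ (∀ j ≤ k, 0 ≤ a j) ∧ c = objAmp y γ lam k τ a } := rfl
      have h2 : sInf { c | ∃ (k : ℕ) (τ : ℕ → ℕ) (a : ℕ → ℝ), IsSeg 0 s k τ ∧
            (∀ j ≤ k, 0 ≤ a j) ∧ a k = α ∧ c = objAmp y γ lam k τ a }
          - (segCost y γ (s'+1) s α + lam) ≤ Fval y γ lam (s'+1) := by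
        rw [hdef]
        refine le_csInf (Fval_nonempty y γ lam s') ?_
        intro c1 hc1
        linarith [key c1 hc1]
      linarith

lemma objOpt_nonneg {y : ℕ → ℝ} {γ lam : ℝ} (hlam : 0 ≤ lam) (k : ℕ) (τ : ℕ → ℕ) :
    0 ≤ objOpt y γ lam k τ := by
  unfold objOpt
  have h1 : 0 ≤ ∑ j ∈ Finset.range (k+1), segMin y γ (τ j) (τ (j+1)) :=
    Finset.sum_nonneg fun j _ => segMin_nonneg _ _ _ _
  have h2 : (0:ℝ) ≤ (k:ℝ) := Nat.cast_nonneg k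
  positivity

lemma zpow_cancel {γ : ℝ} (hγ : γ ≠ 0) (x : ℝ) {e1 e2 : ℤ} (h : e1 + e2 = 0) :
    x * γ ^ e1 * γ ^ e2 = x := by
  rw [mul_assoc, ← zpow_add₀ hγ, h, zpow_zero, mul_one]

lemma zpow_shift {γ : ℝ} (hγ : γ ≠ 0) (x : ℝ) {e1 e2 : ℤ} (h : 1 + e1 = e2) :
    γ * x * γ ^ e1 = x * γ ^ e2 := by
  rw [← h, zpow_add₀ hγ, zpow_one]; ring

lemma zpow_cancel3 {γ : ℝ} (hγ : γ ≠ 0) (x : ℝ) {e1 e2 : ℤ} (h : 1 + e1 + e2 = 0) :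
    γ * (x * γ ^ e1) * γ ^ e2 = x := by
  have h1 : γ * (x * γ ^ e1) * γ ^ e2 = x * γ ^ ((1:ℤ) + e1) * γ ^ e2 := by
    rw [zpow_add₀ hγ, zpow_one]; ring
  rw [h1]
  exact zpow_cancel hγ x (by omega)


/-- `C′ = min_{α ≥ 0} { Cost(y_{1:m}, α; γ) + Cost(y_{T:(m+1)}, γα; 1/γ) }`
equals the minimum of the (amplitude-optimized) changepoint objective over segmentations of
`{1,…,T}` whose changepoint set does NOT contain `m`.  The reversed data `y_{T:(m+1)}` has
length `T − m` with entry `t` equal to `y (T + 1 - t)`. -/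
theorem Cprime_eq_changepoint_without_m (T : ℕ) (hT : 2 ≤ T) (y : ℕ → ℝ)
    (γ lam : ℝ) (hγ : 0 < γ) (hlam : 0 ≤ lam) (m : ℕ) (hm1 : 1 ≤ m) (hm2 : m < T) :
    sInf { c | ∃ α : ℝ, 0 ≤ α ∧ c = Cost y γ lam m α +
        Cost (fun t => y (T + 1 - t)) (1/γ) lam (T - m) (γ * α) } =
    sInf { c | ∃ (k : ℕ) (τ : ℕ → ℕ), IsSeg 0 T k τ ∧
        (∀ j, 1 ≤ j → j ≤ k → τ j ≠ m) ∧ c = objOpt y γ lam k τ } := by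
  have hγ0 : γ ≠ 0 := ne_of_gt hγ
  have hTm : 1 ≤ T - m := by omega
  set z : ℕ → ℝ := fun t => y (T + 1 - t) with hz
  apply le_antisymm
  · -- LHS <= RHS
    refine le_csInf ⟨objOpt y γ lam 0 (fun j => if j = 0 then 0 else T),
      0, fun j => if j = 0 then 0 else T, isSeg_single 0 T (by omega),
      fun j h1 h2 => by omega, rfl⟩ ?_
    rintro c ⟨k, τ, hseg, hnm, rfl⟩
    choose αopt hαopt hmineq using fun j : ℕ => segMin_attained y hγ (τ j) (τ (j+1))
    set J := Nat.findGreatest (fun j => τ j < m) k with hJdef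
    have hJk : J ≤ k := Nat.findGreatest_le k
    have hJm : τ J < m :=
      Nat.findGreatest_spec (P := fun j => τ j < m) (Nat.zero_le k)
        (show τ 0 < m by rw [hseg.1]; omega)
    have hJ1 : m < τ (J+1) := by
      by_cases h : J = k
      · rw [h, hseg.2.1]; exact hm2
      · have h1 : ¬ τ (J+1) < m :=
          Nat.findGreatest_is_greatest (P := fun j => τ j < m) (n := k) (k := J+1)
            (by omega) (by omega)
        have h2 : τ (J+1) ≠ m := hnm (J+1) (by omega) (by omega)
        omega
    have hτT : ∀ j ≤ k+1, τ j ≤ T := isSeg_le_top hseg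
    have hτJ1T : τ (J+1) ≤ T := hτT (J+1) (by omega)
    set α : ℝ := αopt J * γ ^ ((m:ℤ) - (τ (J+1) : ℤ)) with hαdef
    have hα : 0 ≤ α := mul_nonneg (hαopt J) (zpow_pos hγ _).le
    have hγα : 0 ≤ γ * α := mul_nonneg hγ.le hα
    have hCA : Cost y γ lam m α ≤ (∑ j ∈ Finset.range J, segCost y γ (τ j) (τ (j+1)) (αopt j))
        + segCost y γ (τ J) m α + lam * J := by
      rw [cost_eq y γ hlam m hm1 hα]
      set τA : ℕ → ℕ := fun j => if j = J+1 then m else τ j with hτA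
      set aA : ℕ → ℝ := fun j => if j = J then α else αopt j with haA
      have hsegA' : IsSeg 0 m J τA := by
        refine ⟨?_, ?_, ?_⟩
        · show (if 0 = J+1 then m else τ 0) = 0
          rw [if_neg (by omega)]; exact hseg.1
        · show (if J+1 = J+1 then m else τ (J+1)) = m
          rw [if_pos rfl]
        · intro j hj
          show (if j = J+1 then m else τ j) < (if j+1 = J+1 then m else τ (j+1))
          rcases Nat.lt_or_ge j J with h' | h'
          · rw [if_neg (by omega), if_neg (by omega)]
            exact hseg.2.2 j (by omega)
          · have hj' : j = J := by omega
            subst hj'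
            rw [if_neg (by omega), if_pos rfl]
            exact hJm
      have hvalA : objAmp y γ lam J τA aA
          = (∑ j ∈ Finset.range J, segCost y γ (τ j) (τ (j+1)) (αopt j))
            + segCost y γ (τ J) m α + lam * J := by
        unfold objAmp
        rw [Finset.sum_range_succ]
        have h4 : ∀ j ∈ Finset.range J,
            segCost y γ (τA j) (τA (j+1)) (aA j) = segCost y γ (τ j) (τ (j+1)) (αopt j) := by
          intro j hj
          rw [Finset.mem_range] at hj
          have e1 : τA j = τ j := by
            show (if j = J+1 then m else τ j) = τ j
            rw [if_neg (by omega)]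
          have e2 : τA (j+1) = τ (j+1) := by
            show (if j+1 = J+1 then m else τ (j+1)) = τ (j+1)
            rw [if_neg (by omega)]
          have e3 : aA j = αopt j := by
            show (if j = J then α else αopt j) = αopt j
            rw [if_neg (by omega)]
          rw [e1, e2, e3]
        have e1 : τA J = τ J := by
          show (if J = J+1 then m else τ J) = τ J
          rw [if_neg (by omega)]
        have e2 : τA (J+1) = m := by
          show (if J+1 = J+1 then m else τ (J+1)) = m
          rw [if_pos rfl]
        have e3 : aA J = α := by
          show (if J = J then α else αopt J) = α
          rw [if_pos rfl]
        rw [Finset.sum_congr rfl h4, e1, e2, e3]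
      refine le_trans (csInf_le (costSet_bdd y γ hlam m α)
        ⟨J, τA, aA, hsegA', ?_, ?_, rfl⟩) (le_of_eq hvalA)
      · intro j hj
        show 0 ≤ (if j = J then α else αopt j)
        by_cases h' : j = J
        · rw [if_pos h']; exact hα
        · rw [if_neg h']; exact hαopt j
      · show (if J = J then α else αopt J) = α
        rw [if_pos rfl]
    have hCB : Cost z (1/γ) lam (T-m) (γ*α) ≤
        (∑ i ∈ Finset.range (k-J), segCost y γ (τ (J+1+i)) (τ (J+1+i+1)) (αopt (J+1+i)))
        + segCost y γ m (τ (J+1)) (αopt J) + lam * ((k-J : ℕ):ℝ) := by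
      rw [cost_eq z (1/γ) hlam (T-m) hTm hγα]
      set τB : ℕ → ℕ := fun i => if i = (k-J)+1 then T - m else T - τ (k+1-i) with hτB
      set aB : ℕ → ℝ := fun i => if i = k-J then γ*α
        else αopt (k-i) * γ ^ ((τ (k-i) : ℤ) - (τ (k+1-i) : ℤ) + 1) with haB
      have hsegB' : IsSeg 0 (T-m) (k-J) τB := by
        refine ⟨?_, ?_, ?_⟩
        · show (if 0 = (k-J)+1 then T-m else T - τ (k+1-0)) = 0
          rw [if_neg (by omega), Nat.sub_zero, hseg.2.1, Nat.sub_self]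
        · show (if (k-J)+1 = (k-J)+1 then T-m else T - τ (k+1-((k-J)+1))) = T-m
          rw [if_pos rfl]
        · intro i hi
          show (if i = (k-J)+1 then T-m else T - τ (k+1-i))
            < (if i+1 = (k-J)+1 then T-m else T - τ (k+1-(i+1)))
          rcases Nat.lt_or_ge i (k-J) with h' | h'
          · rw [if_neg (by omega), if_neg (by omega),
              show k+1-(i+1) = k-i from by omega,
              show k+1-i = (k-i)+1 from by omega]
            have ha1 : τ (k-i) < τ ((k-i)+1) := hseg.2.2 (k-i) (by omega)
            have ha2 : τ ((k-i)+1) ≤ T := hτT ((k-i)+1) (by omega)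
            omega
          · have hi' : i = k-J := by omega
            subst hi'
            rw [if_neg (by omega), if_pos rfl,
              show k+1-(k-J) = J+1 from by omega]
            omega
      have hterm : ∀ i ∈ Finset.range (k-J),
          segCost z (1/γ) (τB i) (τB (i+1)) (aB i)
          = segCost y γ (τ (J+1+((k-J)-1-i))) (τ (J+1+((k-J)-1-i)+1))
              (αopt (J+1+((k-J)-1-i))) := by
        intro i hi
        rw [Finset.mem_range] at hi
        rw [show J+1+((k-J)-1-i) = k-i from by omega]
        have e1 : τB i = T - τ ((k-i)+1) := by
          show (if i = (k-J)+1 then T-m else T - τ (k+1-i)) = _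
          rw [if_neg (by omega), show k+1-i = (k-i)+1 from by omega]
        have e2 : τB (i+1) = T - τ (k-i) := by
          show (if i+1 = (k-J)+1 then T-m else T - τ (k+1-(i+1))) = _
          rw [if_neg (by omega), show k+1-(i+1) = k-i from by omega]
        have e3 : aB i = αopt (k-i) * γ ^ ((τ (k-i) : ℤ) - (τ ((k-i)+1) : ℤ) + 1) := by
          show (if i = k-J then γ*α
            else αopt (k-i) * γ ^ ((τ (k-i) : ℤ) - (τ (k+1-i) : ℤ) + 1)) = _
          rw [if_neg (by omega), show k+1-i = (k-i)+1 from by omega]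
        rw [e1, e2, e3]
        have hb1 : τ ((k-i)+1) ≤ T := hτT ((k-i)+1) (by omega)
        have hb2 : τ (k-i) ≤ τ ((k-i)+1) := (hseg.2.2 (k-i) (by omega)).le
        rw [segCost_rev y hγ T (T - τ ((k-i)+1)) (T - τ (k-i)) (by omega)]
        rw [show T-(T - τ (k-i)) = τ (k-i) from by omega,
          show T-(T - τ ((k-i)+1)) = τ ((k-i)+1) from by omega]
        congr 1
        exact zpow_cancel hγ0 (αopt (k-i)) (by omega)
      have hlast : segCost z (1/γ) (τB (k-J)) (τB ((k-J)+1)) (aB (k-J))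
          = segCost y γ m (τ (J+1)) (αopt J) := by
        have e1 : τB (k-J) = T - τ (J+1) := by
          show (if k-J = (k-J)+1 then T-m else T - τ (k+1-(k-J))) = _
          rw [if_neg (by omega), show k+1-(k-J) = J+1 from by omega]
        have e2 : τB ((k-J)+1) = T - m := by
          show (if (k-J)+1 = (k-J)+1 then T-m else _) = T-m
          rw [if_pos rfl]
        have e3 : aB (k-J) = γ*α := by
          show (if k-J = k-J then γ*α else _) = γ*α
          rw [if_pos rfl]
        rw [e1, e2, e3]
        rw [segCost_rev y hγ T (T - τ (J+1)) (T-m) (by omega)]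
        rw [show T-(T-m) = m from by omega,
          show T-(T - τ (J+1)) = τ (J+1) from by omega]
        congr 1
        rw [hαdef]
        exact zpow_cancel3 hγ0 (αopt J) (by omega)
      have hvalB : objAmp z (1/γ) lam (k-J) τB aB
          = (∑ i ∈ Finset.range (k-J),
              segCost y γ (τ (J+1+i)) (τ (J+1+i+1)) (αopt (J+1+i)))
            + segCost y γ m (τ (J+1)) (αopt J) + lam * ((k-J : ℕ):ℝ) := by
        unfold objAmp
        rw [Finset.sum_range_succ, Finset.sum_congr rfl hterm, hlast,
          Finset.sum_range_reflect
            (fun i => segCost y γ (τ (J+1+i)) (τ (J+1+i+1)) (αopt (J+1+i))) (k-J)]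
      refine le_trans (csInf_le (costSet_bdd z (1/γ) hlam (T-m) (γ*α))
        ⟨k-J, τB, aB, hsegB', ?_, ?_, rfl⟩) (le_of_eq hvalB)
      · intro i hi
        show 0 ≤ (if i = k-J then γ*α
          else αopt (k-i) * γ ^ ((τ (k-i) : ℤ) - (τ (k+1-i) : ℤ) + 1))
        by_cases h' : i = k-J
        · rw [if_pos h']; exact hγα
        · rw [if_neg h']; exact mul_nonneg (hαopt (k-i)) (zpow_pos hγ _).le
      · show (if k-J = k-J then γ*α else _) = γ*α
        rw [if_pos rfl]
    have hOpt : objOpt y γ lam k τ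
        = (∑ j ∈ Finset.range (k+1), segCost y γ (τ j) (τ (j+1)) (αopt j)) + lam * k := by
      unfold objOpt
      rw [Finset.sum_congr rfl (fun j _ => hmineq j)]
    have hsum : ∑ j ∈ Finset.range (k+1), segCost y γ (τ j) (τ (j+1)) (αopt j)
        = (∑ j ∈ Finset.range J, segCost y γ (τ j) (τ (j+1)) (αopt j))
          + segCost y γ (τ J) (τ (J+1)) (αopt J)
          + ∑ i ∈ Finset.range (k-J), segCost y γ (τ (J+1+i)) (τ (J+1+i+1)) (αopt (J+1+i)) := by
      rw [show k+1 = (J+1)+(k-J) from by omega, Finset.sum_range_add, Finset.sum_range_succ]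
    have hsplit : segCost y γ (τ J) (τ (J+1)) (αopt J)
        = segCost y γ (τ J) m α + segCost y γ m (τ (J+1)) (αopt J) := by
      rw [segCost_split y hγ0 (τ J) m (τ (J+1)) hJm.le hJ1.le (αopt J), ← hαdef]
    have hlamk : lam * ((k:ℕ):ℝ) = lam * ((J:ℕ):ℝ) + lam * ((k-J:ℕ):ℝ) := by
      rw [Nat.cast_sub hJk]
      ring
    refine le_trans (csInf_le ⟨0, ?_⟩ ⟨α, hα, rfl⟩) ?_
    · rintro c ⟨α', hα', rfl⟩
      have h1 := Cost_nonneg y γ hlam m α'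
      have h2 := Cost_nonneg z (1/γ) hlam (T-m) (γ*α')
      linarith
    · linarith [hCA, hCB]
  · -- RHS ≤ LHS
    refine le_csInf ⟨Cost y γ lam m 0 + Cost z (1/γ) lam (T-m) (γ*0), 0, le_rfl, rfl⟩ ?_
    rintro c ⟨α, hα, rfl⟩
    have hγα : 0 ≤ γ * α := mul_nonneg hγ.le hα
    rw [cost_eq y γ hlam m hm1 hα, cost_eq z (1/γ) hlam (T-m) hTm hγα]
    refine le_add_csInf (costSet_nonempty y γ lam m hm1 hα)
      (costSet_nonempty z (1/γ) lam (T-m) hTm hγα) ?_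
    rintro c1 ⟨k1, τa, aa, hsegA, haa, haaK, rfl⟩ c2 ⟨k2, τb, ab, hsegB, hab, habK, rfl⟩
    have hτam : ∀ j ≤ k1, τa j < m := by
      intro j hj
      have h1 := isSeg_lt hsegA j (k1+1) (by omega) le_rfl
      rw [hsegA.2.1] at h1; exact h1
    have hτbm : ∀ i ≤ k2, τb i < T - m := by
      intro i hi
      have h1 := isSeg_lt hsegB i (k2+1) (by omega) le_rfl
      rw [hsegB.2.1] at h1; exact h1
    have hτbM : ∀ i ≤ k2+1, τb i ≤ T - m := isSeg_le_top hsegB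
    set τc : ℕ → ℕ := fun j => if j ≤ k1 then τa j else T - τb (k1+k2+1-j) with hτc
    set ac : ℕ → ℝ := fun j => if j < k1 then aa j else if j = k1 then
        α * γ ^ (((T - τb k2 : ℕ):ℤ) - (m:ℤ))
      else ab (k1+k2-j) * γ ^ ((τb (k1+k2+1-j) : ℤ) - (τb (k1+k2-j) : ℤ) - 1) with hac
    have hacnn : ∀ j ≤ k1+k2, 0 ≤ ac j := by
      intro j hj
      show 0 ≤ (if j < k1 then aa j else if j = k1 then
          α * γ ^ (((T - τb k2 : ℕ):ℤ) - (m:ℤ))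
        else ab (k1+k2-j) * γ ^ ((τb (k1+k2+1-j) : ℤ) - (τb (k1+k2-j) : ℤ) - 1))
      by_cases h1 : j < k1
      · rw [if_pos h1]; exact haa j (by omega)
      · rw [if_neg h1]
        by_cases h2 : j = k1
        · rw [if_pos h2]; exact mul_nonneg hα (zpow_pos hγ _).le
        · rw [if_neg h2]
          exact mul_nonneg (hab (k1+k2-j) (by omega)) (zpow_pos hγ _).le
    have hsegC : IsSeg 0 T (k1+k2) τc := by
      refine ⟨?_, ?_, ?_⟩
      · show (if 0 ≤ k1 then τa 0 else _) = 0
        rw [if_pos (Nat.zero_le k1)]; exact hsegA.1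
      · show (if k1+k2+1 ≤ k1 then τa (k1+k2+1) else T - τb (k1+k2+1-(k1+k2+1))) = T
        rw [if_neg (by omega), Nat.sub_self, hsegB.1]
        omega
      · intro j hj
        show (if j ≤ k1 then τa j else T - τb (k1+k2+1-j))
          < (if j+1 ≤ k1 then τa (j+1) else T - τb (k1+k2+1-(j+1)))
        rcases Nat.lt_or_ge j k1 with h1 | h1
        · rw [if_pos (by omega), if_pos (by omega)]
          exact hsegA.2.2 j (by omega)
        · rcases Nat.eq_or_lt_of_le h1 with h2 | h2
          · rw [if_pos (by omega), if_neg (by omega), ← h2,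
              show k1+k2+1-(k1+1) = k2 from by omega]
            have h3 := hτam k1 le_rfl
            have h4 := hτbm k2 le_rfl
            omega
          · rw [if_neg (by omega), if_neg (by omega)]
            have e1 : k1+k2+1-j = (k1+k2-j)+1 := by omega
            rw [e1, show k1+k2+1-(j+1) = k1+k2-j from by omega]
            have h3 := hsegB.2.2 (k1+k2-j) (by omega)
            have h4 := hτbM ((k1+k2-j)+1) (by omega)
            omega
    have hnmC : ∀ j, 1 ≤ j → j ≤ k1+k2 → τc j ≠ m := by
      intro j h1 h2
      show (if j ≤ k1 then τa j else T - τb (k1+k2+1-j)) ≠ m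
      by_cases h3 : j ≤ k1
      · rw [if_pos h3]
        have := hτam j h3
        omega
      · rw [if_neg h3]
        have h4 := hτbm (k1+k2+1-j) (by omega)
        have h5 := hτbM (k1+k2+1-j) (by omega)
        omega
    -- value identity
    have hA1 : segCost y γ (τa k1) (τa (k1+1)) (aa k1) = segCost y γ (τa k1) m α := by
      rw [hsegA.2.1, haaK]
    have hBlast : segCost z (1/γ) (τb k2) (τb (k2+1)) (ab k2)
        = segCost y γ m (T - τb k2) (α * γ ^ (((T - τb k2 : ℕ):ℤ) - (m:ℤ))) := by
      rw [hsegB.2.1, habK]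
      rw [segCost_rev y hγ T (τb k2) (T-m) (by omega) (γ*α)]
      rw [show T-(T-m) = m from by omega]
      congr 1
      have h4 := hτbM k2 (by omega)
      exact zpow_shift hγ0 α (by omega)
    have hmid : segCost y γ (τa k1) (T - τb k2) (α * γ ^ (((T - τb k2 : ℕ):ℤ) - (m:ℤ)))
        = segCost y γ (τa k1) m α
          + segCost y γ m (T - τb k2) (α * γ ^ (((T - τb k2 : ℕ):ℤ) - (m:ℤ))) := by
      have h3 := hτam k1 le_rfl
      have h4 := hτbm k2 le_rfl
      rw [segCost_split y hγ0 (τa k1) m (T - τb k2) (by omega) (by omega)]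
      congr 2
      exact zpow_cancel hγ0 α (by omega)
    have hBterm : ∀ i ∈ Finset.range k2,
        segCost y γ (τc (k1+1+i)) (τc (k1+1+i+1)) (ac (k1+1+i))
        = segCost z (1/γ) (τb (k2-1-i)) (τb (k2-1-i+1)) (ab (k2-1-i)) := by
      intro i hi
      rw [Finset.mem_range] at hi
      have e1 : τc (k1+1+i) = T - τb (k2-1-i+1) := by
        show (if k1+1+i ≤ k1 then τa (k1+1+i) else T - τb (k1+k2+1-(k1+1+i))) = _
        rw [if_neg (by omega), show k1+k2+1-(k1+1+i) = k2-1-i+1 from by omega]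
      have e2 : τc (k1+1+i+1) = T - τb (k2-1-i) := by
        show (if k1+1+i+1 ≤ k1 then τa (k1+1+i+1) else T - τb (k1+k2+1-(k1+1+i+1))) = _
        rw [if_neg (by omega), show k1+k2+1-(k1+1+i+1) = k2-1-i from by omega]
      have e3 : ac (k1+1+i) = ab (k2-1-i)
          * γ ^ ((τb (k2-1-i+1) : ℤ) - (τb (k2-1-i) : ℤ) - 1) := by
        show (if k1+1+i < k1 then aa (k1+1+i) else if k1+1+i = k1 then _ else
          ab (k1+k2-(k1+1+i)) * γ ^ ((τb (k1+k2+1-(k1+1+i)) : ℤ) - (τb (k1+k2-(k1+1+i)) : ℤ) - 1)) = _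
        rw [if_neg (by omega), if_neg (by omega),
          show k1+k2-(k1+1+i) = k2-1-i from by omega,
          show k1+k2+1-(k1+1+i) = k2-1-i+1 from by omega]
      rw [e1, e2, e3]
      rw [segCost_rev y hγ T (τb (k2-1-i)) (τb (k2-1-i+1))
        (le_trans (hτbM (k2-1-i+1) (by omega)) (by omega)) (ab (k2-1-i))]
    have hval : objAmp y γ lam (k1+k2) τc ac
        = objAmp y γ lam k1 τa aa + objAmp z (1/γ) lam k2 τb ab := by
      unfold objAmp
      rw [show k1+k2+1 = (k1+1)+k2 from by omega, Finset.sum_range_add,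
        Finset.sum_range_succ]
      have hAsum : ∀ j ∈ Finset.range k1,
          segCost y γ (τc j) (τc (j+1)) (ac j) = segCost y γ (τa j) (τa (j+1)) (aa j) := by
        intro j hj
        rw [Finset.mem_range] at hj
        have e1 : τc j = τa j := by
          show (if j ≤ k1 then τa j else _) = τa j
          rw [if_pos (by omega)]
        have e2 : τc (j+1) = τa (j+1) := by
          show (if j+1 ≤ k1 then τa (j+1) else _) = τa (j+1)
          rw [if_pos (by omega)]
        have e3 : ac j = aa j := by
          show (if j < k1 then aa j else _) = aa j
          rw [if_pos (by omega)]
        rw [e1, e2, e3]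
      have hmid' : segCost y γ (τc k1) (τc (k1+1)) (ac k1)
          = segCost y γ (τa k1) m α
            + segCost y γ m (T - τb k2) (α * γ ^ (((T - τb k2 : ℕ):ℤ) - (m:ℤ))) := by
        have e1 : τc k1 = τa k1 := by
          show (if k1 ≤ k1 then τa k1 else _) = τa k1
          rw [if_pos le_rfl]
        have e2 : τc (k1+1) = T - τb k2 := by
          show (if k1+1 ≤ k1 then τa (k1+1) else T - τb (k1+k2+1-(k1+1))) = _
          rw [if_neg (by omega), show k1+k2+1-(k1+1) = k2 from by omega]
        have e3 : ac k1 = α * γ ^ (((T - τb k2 : ℕ):ℤ) - (m:ℤ)) := by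
          show (if k1 < k1 then aa k1 else if k1 = k1 then
            α * γ ^ (((T - τb k2 : ℕ):ℤ) - (m:ℤ)) else _) = _
          rw [if_neg (by omega), if_pos rfl]
        rw [e1, e2, e3, hmid]
      have hBsum : ∑ i ∈ Finset.range k2,
          segCost y γ (τc (k1+1+i)) (τc (k1+1+i+1)) (ac (k1+1+i))
          = ∑ i ∈ Finset.range k2,
            segCost z (1/γ) (τb i) (τb (i+1)) (ab i) := by
        rw [Finset.sum_congr rfl hBterm]
        exact Finset.sum_range_reflect (fun i => segCost z (1/γ) (τb i) (τb (i+1)) (ab i)) k2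
      rw [Finset.sum_congr rfl hAsum, hmid', hBsum, Finset.sum_range_succ,
        Finset.sum_range_succ, hA1, hBlast]
      push_cast
      ring
    have h1 : sInf { c | ∃ (k : ℕ) (τ : ℕ → ℕ), IsSeg 0 T k τ ∧
          (∀ j, 1 ≤ j → j ≤ k → τ j ≠ m) ∧ c = objOpt y γ lam k τ }
        ≤ objOpt y γ lam (k1+k2) τc := by
      refine csInf_le ⟨0, ?_⟩ ⟨k1+k2, τc, hsegC, hnmC, rfl⟩
      rintro c ⟨k, τ, _, _, rfl⟩
      exact objOpt_nonneg hlam k τ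
    have h2 : objOpt y γ lam (k1+k2) τc ≤ objAmp y γ lam (k1+k2) τc ac := by
      unfold objOpt objAmp
      refine add_le_add (Finset.sum_le_sum ?_) le_rfl
      intro j hj
      rw [Finset.mem_range] at hj
      exact segMin_le y γ _ _ (hacnn j (by omega))
    linarith [hval.le]
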